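/- (Kraft inequality for prefix-free codes) Let C be a finite set of nonempty words over an alphabet of size k ≥ 2 such that no word of C is a proper prefix of another. Then ∑_{w ∈ C} k^{-|w|} ≤ 1. -/

import Mathlib

open Mathlib in
theorem stmt_3 {α : Type*} [Fintype α] [DecidableEq α]
    (k : ℕ) (hk : Fintype.card α = k) (hk2 : 2 ≤ k)
    (C : Finset (List α))
    (hne : ∀ w ∈ C, w ≠ [])
    (hpf : ∀ u ∈ C, ∀ v ∈ C, u ≠ v → ¬ u <+: v) :
    ∑ w ∈ C, ((k : ℝ) ^ w.length)⁻¹ ≤ 1 := by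
  classical
  have hk0 : (0:ℝ) < (k:ℝ) := by
    have : 0 < k := by omega
    exact_mod_cast this
  set L := C.sup (·.length) with hL
  have hwL : ∀ w ∈ C, w.length ≤ L := fun w hw => Finset.le_sup (f := fun w => w.length) hw
  let E : List α → Finset (List.Vector α L) := fun w => Finset.univ.filter fun v => w <+: v.toList
  have hmemE : ∀ w v, v ∈ E w ↔ w <+: v.toList := by
    intro w v; simp [E]
  have hcard : ∀ w ∈ C, (E w).card = k ^ (L - w.length) := by
    intro w hw
    have hlen := hwL w hw
    haveI : Fintype {l : List α // l.length = L - w.length} :=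
      inferInstanceAs (Fintype (List.Vector α (L - w.length)))
    have hEq : (E w).card = (Finset.univ : Finset (List.Vector α (L - w.length))).card := by
      apply Finset.card_bij'
        (i := fun v _ => (⟨v.1.drop w.length, by rw [List.length_drop, v.2]⟩ :
          List.Vector α (L - w.length)))
        (j := fun u _ => (⟨w ++ u.1, by rw [List.length_append, u.2]; omega⟩ : List.Vector α L))
      case hi => intro v hv; exact Finset.mem_univ (α := List.Vector α (L - w.length)) _
      case hj =>
        intro u hu
        refine (hmemE _ _).2 ?_
        exact List.prefix_append _ _
      case left_inv =>
        intro v hv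
        replace hv := (hmemE w v).1 hv
        obtain ⟨t, ht⟩ := hv
        apply Subtype.ext
        show w ++ v.1.drop w.length = v.1
        have hvt : v.1 = w ++ t := ht.symm
        rw [hvt, List.drop_left]
      case right_inv =>
        intro u hu
        apply Subtype.ext
        show (w ++ u.1).drop w.length = u.1
        rw [List.drop_left]
    rw [hEq, Finset.card_univ, card_vector, hk]
  have hdisj : ∀ u ∈ C, ∀ w ∈ C, u ≠ w → Disjoint (E u) (E w) := by
    intro u hu w hw huw
    rw [Finset.disjoint_left]
    intro v hvu hvw
    rw [hmemE] at hvu hvw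
    rcases List.prefix_or_prefix_of_prefix hvu hvw with h | h
    · exact hpf u hu w hw huw h
    · exact hpf w hw u hu (Ne.symm huw) h
  have hsum : ∑ w ∈ C, k ^ (L - w.length) ≤ k ^ L := by
    calc ∑ w ∈ C, k ^ (L - w.length) = ∑ w ∈ C, (E w).card :=
          Finset.sum_congr rfl fun w hw => (hcard w hw).symm
      _ = (C.biUnion E).card := (Finset.card_biUnion hdisj).symm
      _ ≤ Fintype.card (List.Vector α L) := Finset.card_le_univ _
      _ = k ^ L := by rw [card_vector, hk]
  have key : ∀ w ∈ C, ((k:ℝ) ^ w.length)⁻¹ = (k:ℝ) ^ (L - w.length) * ((k:ℝ)^L)⁻¹ := by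
    intro w hw
    field_simp
    rw [← pow_add, Nat.add_sub_of_le (hwL w hw)]
  calc ∑ w ∈ C, ((k:ℝ)^w.length)⁻¹ = (∑ w ∈ C, (k:ℝ)^(L - w.length)) * ((k:ℝ)^L)⁻¹ := by
        rw [Finset.sum_mul]; exact Finset.sum_congr rfl key
    _ ≤ (k:ℝ)^L * ((k:ℝ)^L)⁻¹ := by
        apply mul_le_mul_of_nonneg_right _ (by positivity)
        exact_mod_cast hsum
    _ = 1 := mul_inv_cancel₀ (by positivity)
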